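/- arXiv:0708.3869 — 4 statements merged into one kernel-verified Lean document; each statement's English description precedes it below -/
import Mathlib

section
/- If S, C is a T-periodic solution of the enzyme system with 0 < C(t) < K for all t, then the mean input satisfies (1/T)∫₀ᵀ I(t) dt < k2·K. (Necessary condition for existence of a periodic solution.) -/
theorem necessary_condition
    (T k1 km1 k2 K : ℝ) (hT : 0 < T) (hk1 : 0 ≤ k1) (hkm1 : 0 ≤ km1)
    (hk2 : 0 < k2) (hK : 0 < K)
    (I S C : ℝ → ℝ) (hI : Continuous I) (hIper : ∀ t, I (t + T) = I t)
    (hS : Differentiable ℝ S) (hC : Differentiable ℝ C)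
    (hSper : ∀ t, S (t + T) = S t) (hCper : ∀ t, C (t + T) = C t)
    (hS' : ∀ t, deriv S t = I t - k1 * (K - C t) * S t + km1 * C t)
    (hC' : ∀ t, deriv C t = k1 * (K - C t) * S t - (km1 + k2) * C t)
    (hCbd : ∀ t, 0 < C t ∧ C t < K) :
    (1 / T) * ∫ t in (0:ℝ)..T, I t < k2 * K := by
  have hSc : Continuous S := hS.continuous
  have hCc : Continuous C := hC.continuous
  set f : ℝ → ℝ := fun t => S t + C t with hf
  have hfderiv : ∀ t, HasDerivAt f (I t - k2 * C t) t := by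
    intro t
    have h1 := (hS.differentiableAt (x := t)).hasDerivAt
    have h2 := (hC.differentiableAt (x := t)).hasDerivAt
    have := h1.add h2
    rw [hS' t, hC' t] at this
    convert this using 1
    · rfl
    · rfl
    · rfl
    · ring
  have hcont : Continuous (fun t => I t - k2 * C t) :=
    hI.sub (continuous_const.mul hCc)
  have hint : (∫ t in (0:ℝ)..T, (I t - k2 * C t)) = f T - f 0 := by
    exact intervalIntegral.integral_eq_sub_of_hasDerivAt
      (fun t _ => hfderiv t) (hcont.intervalIntegrable 0 T)
  have hfper : f T = f 0 := by
    have := hSper 0; have h2 := hCper 0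
    simp only [zero_add] at this h2
    simp [hf, this, h2]
  rw [hfper, sub_self] at hint
  have hintI : IntervalIntegrable I MeasureTheory.volume 0 T := hI.intervalIntegrable 0 T
  have hintC : IntervalIntegrable C MeasureTheory.volume 0 T := hCc.intervalIntegrable 0 T
  have hsplit : (∫ t in (0:ℝ)..T, I t) = k2 * ∫ t in (0:ℝ)..T, C t := by
    have := intervalIntegral.integral_sub hintI ((hintC.const_mul k2))
    rw [hint] at this
    have h := sub_eq_zero.mp this.symm
    rw [h, intervalIntegral.integral_const_mul]
  have hClt : (∫ t in (0:ℝ)..T, C t) < ∫ t in (0:ℝ)..T, K := by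
    apply intervalIntegral.integral_lt_integral_of_continuousOn_of_le_of_exists_lt hT
      hCc.continuousOn continuousOn_const
      (fun x _ => (hCbd x).2.le) ⟨0, ⟨le_refl 0, hT.le⟩, (hCbd 0).2⟩
  rw [intervalIntegral.integral_const, smul_eq_mul, sub_zero] at hClt
  rw [hsplit]
  rw [div_mul_eq_mul_div, one_mul, div_lt_iff₀ hT]
  calc k2 * ∫ t in (0:ℝ)..T, C t < k2 * (T * K) := by
        exact mul_lt_mul_of_pos_left hClt hk2
    _ = k2 * K * T := by ring
end

section
/- For constant input I(t) = Ī ≥ 0, a stationary solution (S̄, C̄) with S̄ > 0 and 0 < C̄ < K of the system 0 = Ī - k1(K-C̄)S̄ + k₋₁C̄, 0 = k1(K-C̄)S̄ - (k₋₁+k2)C̄ exists if and only if 0 < Ī < k2·K, and in that case it is unique. -/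
theorem stationary_exists_iff
    (k1 k2 km1 K Ibar : ℝ) (hk1 : 0 < k1) (hk2 : 0 < k2) (hkm1 : 0 ≤ km1)
    (hK : 0 < K) (hI : 0 ≤ Ibar) :
    ((∃ Sbar Cbar : ℝ, Sbar > 0 ∧ 0 < Cbar ∧ Cbar < K ∧
        Ibar - k1 * (K - Cbar) * Sbar + km1 * Cbar = 0 ∧
        k1 * (K - Cbar) * Sbar - (km1 + k2) * Cbar = 0) ↔
      (0 < Ibar ∧ Ibar < k2 * K)) ∧
    (∀ S1 C1 S2 C2 : ℝ,
      (S1 > 0 ∧ 0 < C1 ∧ C1 < K ∧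
        Ibar - k1 * (K - C1) * S1 + km1 * C1 = 0 ∧
        k1 * (K - C1) * S1 - (km1 + k2) * C1 = 0) →
      (S2 > 0 ∧ 0 < C2 ∧ C2 < K ∧
        Ibar - k1 * (K - C2) * S2 + km1 * C2 = 0 ∧
        k1 * (K - C2) * S2 - (km1 + k2) * C2 = 0) →
      S1 = S2 ∧ C1 = C2) := by
  constructor
  · constructor
    · rintro ⟨S, C, hS, hC0, hCK, h1, h2⟩
      have hIC : Ibar = k2 * C := by linarith
      constructor
      · rw [hIC]; positivity
      · rw [hIC]; exact (mul_lt_mul_iff_right₀ hk2).2 hCK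
    · rintro ⟨hI0, hIK⟩
      set C := Ibar / k2 with hCdef
      have hC0 : 0 < C := div_pos hI0 hk2
      have hCK : C < K := (div_lt_iff₀ hk2).2 (by linarith)
      have hKC : 0 < K - C := by linarith
      have key : k1 * (K - C) * ((km1 + k2) * C / (k1 * (K - C))) = (km1 + k2) * C := by
        rw [mul_div_cancel₀]
        positivity
      have hk2C : k2 * C = Ibar := by
        rw [hCdef, mul_div_cancel₀ _ hk2.ne']
      refine ⟨(km1 + k2) * C / (k1 * (K - C)), C, ?_, hC0, hCK, ?_, ?_⟩
      · positivity
      · rw [key]; linarith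
      · rw [key]; ring
  · rintro S1 C1 S2 C2 ⟨hS1, hC10, hC1K, h11, h12⟩ ⟨hS2, hC20, hC2K, h21, h22⟩
    have hC1 : Ibar = k2 * C1 := by linarith
    have hC2 : Ibar = k2 * C2 := by linarith
    have hC : C1 = C2 := by
      have := hC1.symm.trans hC2
      exact mul_left_cancel₀ hk2.ne' this
    subst hC
    refine ⟨?_, rfl⟩
    have h : k1 * (K - C1) * S1 = k1 * (K - C1) * S2 := by linarith
    have hne : k1 * (K - C1) ≠ 0 := by
      have : 0 < K - C1 := by linarith
      positivity
    exact mul_left_cancel₀ hne h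
end

section
/- Given a continuous T-periodic function C with ∫₀ᵀ C(t)dt = T·C̄ where C̄ < K, and continuous T-periodic I ≥ 0, k₋₁ ≥ 0, C(t) ≥ 0 for all t, and either Ī > 0 or k₋₁·C̄ > 0, the unique T-periodic solution S of S'(t) + k1(K - C(t))S(t) = I(t) + k₋₁C(t) satisfies S(t) > 0 for all t ∈ ℝ. -/
theorem periodic_solution_positive
    (T k1 km1 K Cbar : ℝ) (hT : 0 < T) (hk1 : 0 < k1) (hkm1 : 0 ≤ km1)
    (hK : 0 < K) (hCbar0 : 0 < Cbar) (hCbarK : Cbar < K)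
    (I C : ℝ → ℝ) (hI : Continuous I) (hIper : ∀ t, I (t + T) = I t)
    (hInn : ∀ t, 0 ≤ I t)
    (hC : Continuous C) (hCper : ∀ t, C (t + T) = C t)
    (hCnn : ∀ t, 0 ≤ C t)
    (hCint : ∫ t in (0:ℝ)..T, C t = T * Cbar)
    (hpos : (1 / T) * (∫ t in (0:ℝ)..T, I t) + km1 * Cbar > 0)
    (S : ℝ → ℝ) (hS : Differentiable ℝ S) (hSper : ∀ t, S (t + T) = S t)
    (hS' : ∀ t, deriv S t + k1 * (K - C t) * S t = I t + km1 * C t) :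
    ∀ t, 0 < S t := by
  set a : ℝ → ℝ := fun t => k1 * (K - C t) with ha_def
  have ha : Continuous a := continuous_const.mul (continuous_const.sub hC)
  set A : ℝ → ℝ := fun t => ∫ s in (0:ℝ)..t, a s with hA_def
  have hA : ∀ t, HasDerivAt A (a t) t := fun t =>
    intervalIntegral.integral_hasDerivAt_right (ha.intervalIntegrable _ _)
      (ha.stronglyMeasurableAtFilter _ _) ha.continuousAt
  have haper : Function.Periodic a T := fun t => by simp [ha_def, hCper t]
  set δ : ℝ := k1 * T * (K - Cbar) with hδ_def
  have hδval : (∫ s in (0:ℝ)..T, a s) = δ := by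
    simp only [ha_def]
    rw [intervalIntegral.integral_const_mul,
      intervalIntegral.integral_sub intervalIntegrable_const (hC.intervalIntegrable _ _),
      intervalIntegral.integral_const, hCint]
    simp [smul_eq_mul]; ring
  have hδpos : 0 < δ := by
    have : 0 < K - Cbar := by linarith
    positivity
  have hAper : ∀ t, A (t + T) = A t + δ := by
    intro t
    have h1 : A t + ∫ s in t..(t+T), a s = A (t+T) :=
      intervalIntegral.integral_add_adjacent_intervals (ha.intervalIntegrable 0 t)
        (ha.intervalIntegrable t (t+T))
    rw [← h1, haper.intervalIntegral_add_eq t 0]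
    simp [hδval]
  set g : ℝ → ℝ := fun t => Real.exp (A t) * S t with hg_def
  have hg : ∀ t, HasDerivAt g (Real.exp (A t) * (I t + km1 * C t)) t := by
    intro t
    have h1 : HasDerivAt (fun t => Real.exp (A t)) (Real.exp (A t) * a t) t :=
      (Real.hasDerivAt_exp (A t)).comp t (hA t)
    have h2 := h1.mul (hS t).hasDerivAt
    refine h2.congr_deriv ?_
    have h3 : I t + km1 * C t = deriv S t + a t * S t := (hS' t).symm
    rw [h3]; ring
  have hgdiff : Differentiable ℝ g := fun t => (hg t).differentiableAt
  have hgmono : Monotone g := by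
    apply monotone_of_deriv_nonneg hgdiff
    intro x
    rw [(hg x).deriv]
    exact mul_nonneg (Real.exp_pos _).le (add_nonneg (hInn x) (mul_nonneg hkm1 (hCnn x)))
  have Snn : ∀ t, 0 ≤ S t := by
    intro t
    by_contra h
    push_neg at h
    have h1 : g (t + T) < g t := by
      have he : g (t + T) = Real.exp (A t + δ) * S t := by
        simp [hg_def, hAper t, hSper t]
      rw [he]
      have hexp : Real.exp (A t) < Real.exp (A t + δ) :=
        Real.exp_lt_exp.mpr (by linarith)
      have : Real.exp (A t + δ) * S t < Real.exp (A t) * S t :=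
        mul_lt_mul_of_neg_right hexp h
      exact this
    exact absurd (hgmono (le_add_of_nonneg_right hT.le)) (not_le.mpr h1)
  intro t0
  rcases (Snn t0).lt_or_eq with h | h
  · exact h
  exfalso
  have hS0 : S t0 = 0 := h.symm
  have hgt0 : g t0 = 0 := by simp [hg_def, hS0]
  have hSprev : S (t0 - T) = 0 := by
    have := hSper (t0 - T)
    rw [sub_add_cancel] at this
    rw [← this]; exact hS0
  have hgprev : g (t0 - T) = 0 := by simp [hg_def, hSprev]
  have hlt : t0 - T < t0 := by linarith
  have hzero : ∀ s ∈ Set.Icc (t0 - T) t0, S s = 0 := by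
    intro s hs
    have h1 : g s ≤ 0 := hgt0 ▸ hgmono hs.2
    have h2 : 0 ≤ g s := hgprev ▸ hgmono hs.1
    have h3 : g s = 0 := le_antisymm h1 h2
    have he := (Real.exp_pos (A s)).ne'
    simpa [hg_def, he] using h3
  have hf0 : ∀ s ∈ Set.Ioo (t0 - T) t0, I s + km1 * C s = 0 := by
    intro s hs
    have hd : deriv S s = 0 := by
      have hev : S =ᶠ[nhds s] (fun _ => (0:ℝ)) := by
        filter_upwards [Ioo_mem_nhds hs.1 hs.2] with x hx
        exact hzero x (Set.Ioo_subset_Icc_self hx)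
      rw [hev.deriv_eq]; simp
    have h4 := hS' s
    rw [hd, hzero s (Set.Ioo_subset_Icc_self hs)] at h4
    simpa using h4.symm
  have hfIcc : ∀ s ∈ Set.Icc (t0 - T) t0, I s + km1 * C s = 0 := by
    have hcont : Continuous (fun s => I s + km1 * C s) := hI.add (continuous_const.mul hC)
    have heq : Set.EqOn (fun s => I s + km1 * C s) (fun _ => (0:ℝ))
        (closure (Set.Ioo (t0 - T) t0)) :=
      Set.EqOn.closure (fun s hs => hf0 s hs) hcont continuous_const
    intro s hs
    exact heq (by rw [closure_Ioo hlt.ne]; exact hs)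
  have hintf : (∫ s in (t0 - T)..t0, (I s + km1 * C s)) = 0 := by
    rw [intervalIntegral.integral_congr (g := fun _ => (0:ℝ))
      (fun s hs => hfIcc s (by rwa [Set.uIcc_of_le hlt.le] at hs))]
    simp
  have hintsplit : (∫ s in (t0 - T)..t0, I s) + km1 * (∫ s in (t0 - T)..t0, C s) = 0 := by
    rw [← intervalIntegral.integral_const_mul,
      ← intervalIntegral.integral_add (f := I) (g := fun x => km1 * C x) (hI.intervalIntegrable _ _)
        ((continuous_const.mul hC).intervalIntegrable _ _)]
    exact hintf
  have hXnn : 0 ≤ ∫ s in (t0 - T)..t0, I s :=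
    intervalIntegral.integral_nonneg hlt.le (fun s _ => hInn s)
  have hYnn : 0 ≤ ∫ s in (t0 - T)..t0, C s :=
    intervalIntegral.integral_nonneg hlt.le (fun s _ => hCnn s)
  have IperF : Function.Periodic I T := hIper
  have CperF : Function.Periodic C T := hCper
  have hIint0 : (∫ s in (0:ℝ)..T, I s) = ∫ s in (t0 - T)..t0, I s := by
    have := IperF.intervalIntegral_add_eq 0 (t0 - T)
    simpa [sub_add_cancel] using this
  have hCint0 : (∫ s in (t0 - T)..t0, C s) = T * Cbar := by
    have := CperF.intervalIntegral_add_eq 0 (t0 - T)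
    rw [zero_add, sub_add_cancel] at this
    rw [← this, hCint]
  have hX0 : (∫ s in (t0 - T)..t0, I s) = 0 := by nlinarith [mul_nonneg hkm1 hYnn]
  have hY0 : km1 * (T * Cbar) = 0 := by
    rw [← hCint0]; nlinarith [mul_nonneg hkm1 hYnn]
  rw [hIint0, hX0] at hpos
  nlinarith [hpos]
end

section
/- Let S, C be differentiable T-periodic functions satisfying C'(t) = k1(K - C(t))S(t) - (k₋₁+k2)C(t) with S(t) > 0 and 0 ≤ C(t) ≤ K for all t, where k1 > 0, k2 > 0, k₋₁ ≥ 0, K > 0. Then 0 < C(t) < K for all t ∈ ℝ. (A strict maximum-principle type bound.) -/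
theorem strict_bounds_C
    (T k1 km1 k2 K : ℝ) (hT : 0 < T) (hk1 : 0 < k1) (hkm1 : 0 ≤ km1)
    (hk2 : 0 < k2) (hK : 0 < K)
    (S C : ℝ → ℝ) (hS : Differentiable ℝ S) (hC : Differentiable ℝ C)
    (hSper : ∀ t, S (t + T) = S t) (hCper : ∀ t, C (t + T) = C t)
    (hC' : ∀ t, deriv C t = k1 * (K - C t) * S t - (km1 + k2) * C t)
    (hSpos : ∀ t, 0 < S t) (hCbd : ∀ t, 0 ≤ C t ∧ C t ≤ K) :
    ∀ t, 0 < C t ∧ C t < K := by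
  intro t
  constructor
  · rcases (hCbd t).1.lt_or_eq with h | h
    · exact h
    · exfalso
      have hmin : IsLocalMin C t :=
        Filter.Eventually.of_forall fun x => h ▸ (hCbd x).1
      have hd := hmin.deriv_eq_zero
      rw [hC' t, ← h] at hd
      nlinarith [mul_pos (mul_pos hk1 hK) (hSpos t)]
  · rcases (hCbd t).2.lt_or_eq with h | h
    · exact h
    · exfalso
      have hmax : IsLocalMax C t :=
        Filter.Eventually.of_forall fun x => h ▸ (hCbd x).2
      have hd := hmax.deriv_eq_zero
      rw [hC' t, h] at hd
      nlinarith [mul_pos (mul_pos hk1 hK) (hSpos t), mul_pos hk2 hK, mul_nonneg hkm1 hK.le]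
end
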